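/- Let a_n be positive with a_1 = b_1 and a_n ≤ a_1 + η ∑_{k=1}^{n-1} C(n,k) a_{n-k} a_k, and let b_n be defined by b_1 = a_1, b_n = a_1/n! + η ∑_{k=1}^{n-1} b_{n-k} b_k for n ≥ 2. Then a_n ≤ b_n · n! for all n ≥ 1. -/

import Mathlib

/-- If `a_n > 0` satisfies `a_1 = b_1` and
`a_n ≤ a_1 + η ∑_{k=1}^{n-1} C(n,k) a_{n-k} a_k`, and `b_n` is defined by `b_1 = a_1`,
`b_n = a_1/n! + η ∑_{k=1}^{n-1} b_{n-k} b_k` for `n ≥ 2`,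
then `a_n ≤ b_n · n!` for all `n ≥ 1`. -/
theorem a_le_b_mul_factorial (a b : ℕ → ℝ) (η : ℝ) (hη : 0 < η)
    (ha1 : 0 < a 1)
    (hapos : ∀ n, 1 ≤ n → 0 < a n)
    (hab : a 1 = b 1)
    (harec : ∀ n, 2 ≤ n →
      a n ≤ a 1 + η * ∑ k ∈ Finset.Ico 1 n, (n.choose k : ℝ) * a (n - k) * a k)
    (hb1 : b 1 = a 1)
    (hbrec : ∀ n, 2 ≤ n →
      b n = a 1 / (n.factorial : ℝ) + η * ∑ k ∈ Finset.Ico 1 n, b (n - k) * b k) :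
    ∀ n, 1 ≤ n → a n ≤ b n * (n.factorial : ℝ) := by
  intro n
  induction n using Nat.strong_induction_on with
  | _ n ih =>
    intro hn
    rcases eq_or_lt_of_le hn with h1 | h2
    · simp [← h1, hb1]
    · have h2 : 2 ≤ n := h2
      have hfac : ∀ m : ℕ, (0:ℝ) < (m.factorial : ℝ) := fun m => by
        exact_mod_cast m.factorial_pos
      have key : ∀ k ∈ Finset.Ico 1 n,
          (n.choose k : ℝ) * a (n - k) * a k ≤ (n.factorial : ℝ) * (b (n - k) * b k) := by
        intro k hk
        simp only [Finset.mem_Ico] at hk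
        have hk1 : 1 ≤ k := hk.1
        have hkn : k < n := hk.2
        have hnk1 : 1 ≤ n - k := by omega
        have hA := ih (n - k) (by omega) hnk1
        have hB := ih k (by omega) hk1
        have hA0 := (hapos (n - k) hnk1).le
        have hB0 := (hapos k hk1).le
        calc (n.choose k : ℝ) * a (n - k) * a k
            ≤ (n.choose k : ℝ) * (b (n - k) * ((n-k).factorial : ℝ)) * (b k * (k.factorial : ℝ)) := by
              apply mul_le_mul
              · exact mul_le_mul_of_nonneg_left hA (by positivity)
              · exact hB
              · exact hB0
              · have : (0:ℝ) < b (n - k) * ((n-k).factorial : ℝ) :=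
                  lt_of_lt_of_le (hapos (n - k) hnk1) hA
                positivity
          _ = ((n.choose k : ℝ) * ((k.factorial : ℝ) * ((n-k).factorial : ℝ))) * (b (n - k) * b k) := by
              ring
          _ = (n.factorial : ℝ) * (b (n - k) * b k) := by
              congr 1
              have := Nat.choose_mul_factorial_mul_factorial hkn.le
              push_cast [← this]
              ring
      have hsum : ∑ k ∈ Finset.Ico 1 n, (n.choose k : ℝ) * a (n - k) * a k
          ≤ (n.factorial : ℝ) * ∑ k ∈ Finset.Ico 1 n, b (n - k) * b k := by
        rw [Finset.mul_sum]
        exact Finset.sum_le_sum key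
      calc a n ≤ a 1 + η * ∑ k ∈ Finset.Ico 1 n, (n.choose k : ℝ) * a (n - k) * a k :=
            harec n h2
        _ ≤ a 1 + η * ((n.factorial : ℝ) * ∑ k ∈ Finset.Ico 1 n, b (n - k) * b k) := by
            exact add_le_add_right (mul_le_mul_of_nonneg_left hsum hη.le) _
        _ = (a 1 / (n.factorial : ℝ) + η * ∑ k ∈ Finset.Ico 1 n, b (n - k) * b k) * (n.factorial : ℝ) := by
            field_simp
        _ = b n * (n.factorial : ℝ) := by rw [← hbrec n h2]
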